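/- For any channel gain g > 0 and noise power spectral density N₀ > 0, the rate utility function (b, p) ↦ b·log₂(1 + g·p/(b·N₀)) is concave on the convex set {(b, p) ∈ ℝ² : b > 0, p ≥ 0} (joint concavity in bandwidth b and power p). -/

import Mathlib

lemma concaveOn_logb_two : ConcaveOn ℝ (Set.Ioi (0:ℝ)) (Real.logb 2) := by
  have h := (strictConcaveOn_log_Ioi.concaveOn).smul
    (c := (Real.log 2)⁻¹) (by positivity)
  convert h using 2 with x
  · rfl
  · rfl
  · rfl
  simp [Real.logb, div_eq_inv_mul, smul_eq_mul]

/-- For any channel gain `g > 0` and noise PSD `N₀ > 0`, the rate utility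
`(b, p) ↦ b · log₂(1 + g·p/(b·N₀))` is concave on the convex set `{(b,p) : b > 0, p ≥ 0}`. -/
theorem rate_utility_concaveOn (g N₀ : ℝ) (hg : 0 < g) (hN₀ : 0 < N₀) :
    ConcaveOn ℝ {q : ℝ × ℝ | 0 < q.1 ∧ 0 ≤ q.2}
      (fun q : ℝ × ℝ => q.1 * Real.logb 2 (1 + g * q.2 / (q.1 * N₀))) := by
  constructor
  · have : {q : ℝ × ℝ | 0 < q.1 ∧ 0 ≤ q.2} = Set.Ioi 0 ×ˢ Set.Ici 0 := by
      ext q; simp [Set.mem_prod]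
    rw [this]
    exact (convex_Ioi 0).prod (convex_Ici 0)
  · rintro ⟨b1, p1⟩ ⟨hb1, hp1⟩ ⟨b2, p2⟩ ⟨hb2, hp2⟩ a t ha ht hat
    simp only [Prod.smul_mk, Prod.mk_add_mk, smul_eq_mul] at *
    set B : ℝ := a * b1 + t * b2 with hB
    have hBpos : 0 < B := by
      rcases lt_or_eq_of_le ha with ha' | ha'
      · have : 0 ≤ t * b2 := mul_nonneg ht hb2.le
        nlinarith
      · have : t = 1 := by linarith
        simp [hB, ← ha', this]; positivity
    set x1 : ℝ := 1 + g * p1 / (b1 * N₀) with hx1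
    set x2 : ℝ := 1 + g * p2 / (b2 * N₀) with hx2
    have hx1pos : (0:ℝ) < x1 := by rw [hx1]; positivity
    have hx2pos : (0:ℝ) < x2 := by rw [hx2]; positivity
    have hl : 0 ≤ a * b1 / B := by positivity
    have hm : 0 ≤ t * b2 / B := by positivity
    have hlm : a * b1 / B + t * b2 / B = 1 := by
      field_simp
      exact hB.symm
    have key := concaveOn_logb_two.2 (Set.mem_Ioi.mpr hx1pos) (Set.mem_Ioi.mpr hx2pos)
      hl hm hlm
    have harg : (a * b1 / B) • x1 + (t * b2 / B) • x2
        = 1 + g * (a * p1 + t * p2) / (B * N₀) := by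
      rw [hx1, hx2]
      simp only [smul_eq_mul]
      field_simp
      ring
    rw [harg] at key
    have key' := mul_le_mul_of_nonneg_left key hBpos.le
    calc a * (b1 * Real.logb 2 x1) + t * (b2 * Real.logb 2 x2)
        = B * ((a * b1 / B) • Real.logb 2 x1 + (t * b2 / B) • Real.logb 2 x2) := by
          simp only [smul_eq_mul]
          field_simp
      _ ≤ B * Real.logb 2 (1 + g * (a * p1 + t * p2) / (B * N₀)) := key'
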